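/- Let A be a finite-dimensional algebra over a field k, let e be an idempotent of A, and let ⟨e⟩ = AeA be the corresponding idempotent ideal. For a finitely generated left A-module M and an integer l ≥ 0, M admits an injective coresolution 0 → M → I_0 → I_1 → ⋯ with I_i ∈ add(D(eA)) for all 0 ≤ i ≤ l if and only if Ext^i_A(A/⟨e⟩, M) = 0 for all 0 ≤ i ≤ l. -/

import Mathlib

open CategoryTheory

noncomputable section

/-- Vanishing of the `n`-th Ext group of two `A`-modules. -/
def ExtVanish (A : Type) [Ring A] (n : ℕ) (X Y : ModuleCat.{0} A) : Prop :=
  Limits.IsZero (((Ext ℤ (ModuleCat.{0} A) n).obj (Opposite.op X)).obj Y)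

/-- `M` belongs to `add X`: it is a direct summand of a finite direct sum of copies of `X`. -/
def InAdd (A : Type) [Ring A] (X M : ModuleCat.{0} A) : Prop :=
  ∃ (n : ℕ) (i : M →ₗ[A] (Fin n → X)) (p : (Fin n → X) →ₗ[A] M),
    p.comp i = LinearMap.id

/-- `N` is a (first) syzygy of `M`: there is an exact sequence `0 → N → P → M → 0`
with `P` projective. -/
def IsSyzygyOf (A : Type) [Ring A] (N M : ModuleCat.{0} A) : Prop :=
  ∃ (P : ModuleCat.{0} A), Module.Projective A P ∧
    ∃ (ι : N →ₗ[A] P) (π : P →ₗ[A] M),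
      Function.Injective ι ∧ Function.Surjective π ∧ Function.Exact ι π

/-- `N` is an `n`-th syzygy of `M`. -/
def IsNthSyzygyOf (A : Type) [Ring A] : ℕ → ModuleCat.{0} A → ModuleCat.{0} A → Prop
  | 0, N, M => Nonempty (N ≅ M)
  | n + 1, N, M => ∃ K : ModuleCat.{0} A, IsSyzygyOf A K M ∧ IsNthSyzygyOf A n N K

/-- `N` is a (first) cosyzygy of `M`: there is an exact sequence `0 → M → I → N → 0`
with `I` injective. -/
def IsCosyzygyOf (A : Type) [Ring A] (N M : ModuleCat.{0} A) : Prop :=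
  ∃ (I : ModuleCat.{0} A), Module.Injective A I ∧
    ∃ (ι : M →ₗ[A] I) (π : I →ₗ[A] N),
      Function.Injective ι ∧ Function.Surjective π ∧ Function.Exact ι π

/-- `N` is an `n`-th cosyzygy of `M`. -/
def IsNthCosyzygyOf (A : Type) [Ring A] : ℕ → ModuleCat.{0} A → ModuleCat.{0} A → Prop
  | 0, N, M => Nonempty (N ≅ M)
  | n + 1, N, M => ∃ K : ModuleCat.{0} A, IsCosyzygyOf A K M ∧ IsNthCosyzygyOf A n N K

/-- The projective dimension of `M` is at most `n`. -/
def ProjDimLE (A : Type) [Ring A] (n : ℕ) (M : ModuleCat.{0} A) : Prop :=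
  ∃ K : ModuleCat.{0} A, IsNthSyzygyOf A n K M ∧ Module.Projective A K

/-- The injective dimension of `M` is at most `n`. -/
def InjDimLE (A : Type) [Ring A] (n : ℕ) (M : ModuleCat.{0} A) : Prop :=
  ∃ K : ModuleCat.{0} A, IsNthCosyzygyOf A n K M ∧ Module.Injective A K

/-- The underlying type of `D(A) = Hom_k(A, k)`. -/
def DualMod (k A : Type) [Field k] [Ring A] [Algebra k A] : Type := A →ₗ[k] k

instance (k A : Type) [Field k] [Ring A] [Algebra k A] : AddCommGroup (DualMod k A) :=
  inferInstanceAs (AddCommGroup (A →ₗ[k] k))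

/-- Auxiliary scalar action for `DualMod`. -/
def dualSMul (k A : Type) [Field k] [Ring A] [Algebra k A] (a : A) (φ : A →ₗ[k] k) :
    A →ₗ[k] k := φ.comp (LinearMap.mulRight k a)

/-- The left `A`-module structure on `D(A)`: `(a • φ) x = φ (x * a)`. -/
instance (k A : Type) [Field k] [Ring A] [Algebra k A] : Module A (DualMod k A) where
  smul a φ := dualSMul k A a φ
  one_smul φ := by
    show dualSMul k A 1 φ = φ
    unfold dualSMul; ext x; show DFunLike.coe (F := A →ₗ[k] k) φ (x * 1) = DFunLike.coe (F := A →ₗ[k] k) φ x; simp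
  mul_smul a b φ := by
    show dualSMul k A (a * b) φ = dualSMul k A a (dualSMul k A b φ)
    unfold dualSMul; ext x
    show DFunLike.coe (F := A →ₗ[k] k) φ (x * (a * b)) = DFunLike.coe (F := A →ₗ[k] k) φ (x * a * b); rw [mul_assoc]
  smul_zero a := by
    show dualSMul k A a 0 = 0
    unfold dualSMul; ext x; simp
  smul_add a φ ψ := by
    show dualSMul k A a (φ + ψ) = dualSMul k A a φ + dualSMul k A a ψ
    unfold dualSMul; ext x; rfl
  add_smul a b φ := by
    show dualSMul k A (a + b) φ = dualSMul k A a φ + dualSMul k A b φ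
    unfold dualSMul; ext x
    show DFunLike.coe (F := A →ₗ[k] k) φ (x * (a + b)) = DFunLike.coe (F := A →ₗ[k] k) φ (x * a) + DFunLike.coe (F := A →ₗ[k] k) φ (x * b)
    rw [mul_add]; exact (show A →ₗ[k] k from φ).map_add (x * a) (x * b)
  zero_smul φ := by
    show dualSMul k A 0 φ = 0
    unfold dualSMul; ext x; show DFunLike.coe (F := A →ₗ[k] k) φ (x * 0) = 0
    rw [mul_zero]; exact (show A →ₗ[k] k from φ).map_zero

/-- `D(A)`, the dual of the right regular module, as an object of `ModuleCat A`. -/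
def DualA (k A : Type) [Field k] [Ring A] [Algebra k A] : ModuleCat.{0} A :=
  ModuleCat.of A (DualMod k A)

/-- The idempotent ideal `⟨e⟩ = AeA`, as a left submodule of `A`. -/
def idemIdeal (A : Type) [Ring A] (e : A) : Submodule A A :=
  Submodule.span A (Set.range fun b : A => e * b)

/-- The quotient `A/⟨e⟩` as a left `A`-module. -/
def quotMod (A : Type) [Ring A] (e : A) : ModuleCat.{0} A :=
  ModuleCat.of A (A ⧸ idemIdeal A e)

/-- The left ideal `Ae = {x | x * e = x}` (for `e` idempotent), as a submodule of `A`. -/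
def leftPart (A : Type) [Ring A] (e : A) : Submodule A A where
  carrier := {x | x * e = x}
  add_mem' := by intro a b ha hb; simp only [Set.mem_setOf_eq] at *; rw [add_mul, ha, hb]
  zero_mem' := by simp
  smul_mem' := by intro c x hx; simp only [Set.mem_setOf_eq, smul_eq_mul] at *;
                  rw [mul_assoc, hx]

/-- `Ae` as an object of `ModuleCat A`. -/
def AeMod (A : Type) [Ring A] (e : A) : ModuleCat.{0} A :=
  ModuleCat.of A (leftPart A e)

/-- `M` is Gorenstein projective: `Ext^i_A(M, A) = 0` for all `i > 0`. -/
def IsGorensteinProjective (A : Type) [Ring A] (M : ModuleCat.{0} A) : Prop :=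
  ∀ i : ℕ, 0 < i → ExtVanish A i M (ModuleCat.of A A)

/-- `M` is Gorenstein injective: `Ext^i_A(D(A), M) = 0` for all `i > 0`. -/
def IsGorensteinInjective (k A : Type) [Field k] [Ring A] [Algebra k A]
    (M : ModuleCat.{0} A) : Prop :=
  ∀ i : ℕ, 0 < i → ExtVanish A i (DualA k A) M

/-- `M ∈ gen_l(Ae)`: `M` has a projective resolution whose terms in degrees `≤ l`
lie in `add (Ae)`. -/
def GenLE (A : Type) [Ring A] (e : A) (l : ℕ) (M : ModuleCat.{0} A) : Prop :=
  ∃ (P : ℕ → ModuleCat.{0} A) (d : ∀ n : ℕ, (P (n + 1) →ₗ[A] P n)) (π : P 0 →ₗ[A] M),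
    (∀ n, Module.Projective A (P n)) ∧
    Function.Surjective π ∧
    Function.Exact (d 0) π ∧
    (∀ n, Function.Exact (d (n + 1)) (d n)) ∧
    (∀ n ≤ l, InAdd A (AeMod A e) (P n))

/-- The underlying `k`-linear functional of an element of `D(A)`. -/
def DualMod.toLin {k A : Type} [Field k] [Ring A] [Algebra k A] (φ : DualMod k A) :
    A →ₗ[k] k := φ

/-- The submodule of `D(A)` of functionals vanishing on `eA`; the quotient is `D(eA)`. -/
def killSub (k A : Type) [Field k] [Ring A] [Algebra k A] (e : A) :
    Submodule A (DualMod k A) where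
  carrier := {φ | ∀ x : A, φ.toLin (e * x) = 0}
  add_mem' := by
    intro φ ψ hφ hψ x
    show φ.toLin (e * x) + ψ.toLin (e * x) = 0
    rw [hφ x, hψ x, add_zero]
  zero_mem' := by intro x; rfl
  smul_mem' := by
    intro a φ hφ x
    show φ.toLin ((e * x) * a) = 0
    rw [mul_assoc]
    exact hφ (x * a)

/-- `D(eA)`, the dual of the right module `eA`, realised as the quotient of `D(A)` by the
functionals vanishing on `eA`. -/
def DeA (k A : Type) [Field k] [Ring A] [Algebra k A] (e : A) : ModuleCat.{0} A :=
  ModuleCat.of A (DualMod k A ⧸ killSub k A e)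

section Aux
variable {k A : Type} [Field k] [Ring A] [Algebra k A]

lemma dual_smul_toLin (a : A) (φ : DualMod k A) (x : A) :
    (a • φ).toLin x = φ.toLin (x * a) := rfl

/-- Baer's criterion for `D(A)`. -/
lemma dualMod_baer [FiniteDimensional k A] : Module.Baer A (DualMod k A) := by
  intro J g
  let Jk : Submodule k A := J.restrictScalars k
  obtain ⟨q, hq⟩ := Jk.exists_isCompl
  let G : Jk →ₗ[k] k :=
    { toFun := fun j => (g ⟨(j : A), j.2⟩).toLin (1 : A)
      map_add' := by
        intro a b
        show (g ⟨((a + b : Jk) : A), (a+b).2⟩).toLin 1 = _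
        have : (⟨((a + b : Jk) : A), (a+b).2⟩ : J) = ⟨(a:A), a.2⟩ + ⟨(b:A), b.2⟩ := rfl
        rw [this, map_add]; rfl
      map_smul' := by
        intro c a
        have h2 : (⟨((c • a : Jk) : A), (c • a).2⟩ : J) = algebraMap k A c • ⟨(a : A), a.2⟩ := by
          apply Subtype.ext
          show c • (a : A) = algebraMap k A c * (a : A)
          rw [Algebra.smul_def]
        show (g ⟨((c • a : Jk) : A), (c • a).2⟩).toLin 1 = _
        rw [h2, map_smul]
        rw [dual_smul_toLin, one_mul]
        have : algebraMap k A c = c • (1 : A) := by rw [Algebra.smul_def, mul_one]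
        rw [this, map_smul]
        rfl }
  let gg : A →ₗ[k] k := G.comp (Submodule.linearProjOfIsCompl Jk q hq)
  have hgg : ∀ x (hx : x ∈ J), gg x = (g ⟨x, hx⟩).toLin 1 := by
    intro x hx
    show G ((Submodule.linearProjOfIsCompl Jk q hq) x) = _
    rw [show (Submodule.linearProjOfIsCompl Jk q hq) x = ⟨x, hx⟩ from
      Submodule.linearProjOfIsCompl_apply_left hq ⟨x, hx⟩]
    rfl
  let gg' : DualMod k A := gg
  refine ⟨LinearMap.toSpanSingleton A (DualMod k A) gg', ?_⟩
  intro x hx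
  apply LinearMap.ext
  intro y
  rw [LinearMap.toSpanSingleton_apply]
  show (x • gg').toLin y = (g ⟨x, hx⟩).toLin y
  rw [dual_smul_toLin]
  have hyx : y * x ∈ J := by simpa using J.smul_mem y hx
  show gg (y * x) = _
  rw [hgg _ hyx]
  have : (⟨y * x, hyx⟩ : J) = y • ⟨x, hx⟩ := rfl
  rw [this, map_smul, dual_smul_toLin, one_mul]

lemma dualMod_injective [FiniteDimensional k A] : Module.Injective A (DualMod k A) :=
  (dualMod_baer).injective

/-- retract of an injective module is injective -/
lemma injective_of_retract {N Q : Type} [AddCommGroup N] [Module A N] [AddCommGroup Q]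
    [Module A Q] (i : N →ₗ[A] Q) (p : Q →ₗ[A] N) (hpi : ∀ x, p (i x) = x)
    (hQ : Module.Injective A Q) : Module.Injective A N where
  out X Y _ _ _ _ f hf g := by
    obtain ⟨h, hh⟩ := hQ.out f hf (i.comp g)
    exact ⟨p.comp h, fun x => by simp [hh x, hpi]⟩

lemma injective_pi {Q : Type} [AddCommGroup Q] [Module A Q] (hQ : Module.Injective A Q)
    (n : ℕ) : Module.Injective A (Fin n → Q) where
  out X Y _ _ _ _ f hf g := by
    have H := fun j : Fin n => hQ.out f hf ((LinearMap.proj j).comp g)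
    choose h hh using H
    exact ⟨LinearMap.pi h, fun x => funext fun j => hh j x⟩
end Aux
section DeAFacts
variable {k A : Type} [Field k] [Ring A] [Algebra k A]

/-- the projection `D(A) → D(A)`, `φ ↦ φ(e ·)`, which is `A`-linear with kernel `killSub`. -/
def projE (k : Type) [Field k] {A : Type} [Ring A] [Algebra k A] (e : A) :
    DualMod k A →ₗ[A] DualMod k A where
  toFun φ := (φ.toLin.comp (LinearMap.mulLeft k e) : DualMod k A)
  map_add' φ ψ := rfl
  map_smul' a φ := by
    apply LinearMap.ext
    intro x
    show φ.toLin (e * x * a) = φ.toLin (e * (x * a))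
    rw [mul_assoc]

lemma projE_toLin (e : A) (φ : DualMod k A) (x : A) :
    (projE k e φ).toLin x = φ.toLin (e * x) := rfl

lemma mem_killSub_iff (e : A) (φ : DualMod k A) :
    φ ∈ killSub k A e ↔ ∀ x, φ.toLin (e * x) = 0 := Iff.rfl

/-- the section `D(eA) → D(A)` of the quotient map. -/
def sectE (k : Type) [Field k] {A : Type} [Ring A] [Algebra k A] (e : A) :
    DeA k A e →ₗ[A] DualMod k A :=
  Submodule.liftQ (killSub k A e) (projE k e)
    (fun φ hφ => by
      apply LinearMap.ext
      intro x
      exact hφ x)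

lemma sectE_mk (e : A) (φ : DualMod k A) :
    sectE k e (Submodule.Quotient.mk φ) = projE k e φ := rfl

lemma mkQ_sectE (e : A) (he : IsIdempotentElem e) (ψ : DeA k A e) :
    Submodule.Quotient.mk (sectE k e ψ) = ψ := by
  obtain ⟨φ, rfl⟩ := Submodule.Quotient.mk_surjective _ ψ
  rw [sectE_mk]
  rw [Submodule.Quotient.eq]
  intro x
  show (projE k e φ - φ).toLin (e * x) = 0
  have : (projE k e φ - φ).toLin (e * x) = φ.toLin (e * (e * x)) - φ.toLin (e * x) := rfl
  rw [this, ← mul_assoc, he.eq, sub_self]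

lemma deA_injective [FiniteDimensional k A] (e : A) (he : IsIdempotentElem e) :
    Module.Injective A (DeA k A e) :=
  injective_of_retract (sectE k e) (killSub k A e).mkQ (mkQ_sectE e he) dualMod_injective

/-- if `e` kills `Y`, every map `Y → D(eA)` vanishes -/
lemma hom_deA_eq_zero (e : A) (he : IsIdempotentElem e) {Y : Type} [AddCommGroup Y]
    [Module A Y] (hY : ∀ y : Y, e • y = 0) (g : Y →ₗ[A] DeA k A e) : g = 0 := by
  apply LinearMap.ext
  intro y
  rw [LinearMap.zero_apply]
  rw [← mkQ_sectE e he (g y)]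
  have h0 : (0 : DeA k A e) = Submodule.Quotient.mk 0 := rfl
  rw [h0]
  change (Submodule.Quotient.mk (sectE k e (g y)) : DualMod k A ⧸ killSub k A e) = Submodule.Quotient.mk 0
  rw [Submodule.Quotient.eq]
  intro x
  -- (sectE e (g y) - 0).toLin (e * x) = sectE e (g (x • y)) evaluated at e... chase:
  have key : ∀ z : Y, (sectE k e (g z)).toLin e = 0 := by
    intro z
    have h1 : g (e • z) = 0 := by rw [hY z, map_zero]
    have h2 : e • g z = 0 := by rw [← map_smul, h1]
    have h3 : sectE k e (e • g z) = 0 := by rw [h2, map_zero]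
    have h4 : (e • sectE k e (g z)).toLin e = 0 := by
      have h6 : e • sectE k e (g z) = sectE k e (e • g z) := (map_smul (sectE k e) e (g z)).symm
      rw [h6, h2, map_zero]
      rfl
    rw [dual_smul_toLin] at h4
    -- h4 : (sectE k e (g z)).toLin (e * e) = 0
    rwa [he.eq] at h4
  have h5 : (sectE k e (g y)).toLin (e * x) = (sectE k e (g (x • y))).toLin e := by
    have : g (x • y) = x • g y := map_smul g x y
    rw [this, map_smul, dual_smul_toLin]
  show (sectE k e (g y) - 0).toLin (e * x) = 0
  rw [sub_zero, h5, key]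
end DeAFacts
section ExtBridge
open CategoryTheory Limits
variable {A : Type} [Ring A]

/-- concrete vanishing of Ext via a fixed projective resolution -/
def CV (P : ChainComplex (ModuleCat.{0} A) ℕ) : ℕ → ModuleCat.{0} A → Prop
  | 0, M => ∀ f : P.X 0 →ₗ[A] M, f.comp (P.d 1 0).hom = 0 → f = 0
  | (n+1), M => ∀ f : P.X (n+1) →ₗ[A] M, f.comp (P.d (n+2) (n+1)).hom = 0 →
      ∃ g : P.X n →ₗ[A] M, f = g.comp (P.d (n+1) n).hom

lemma extVanish_iff_cv {X : ModuleCat.{0} A} (P : CategoryTheory.ProjectiveResolution X)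
    (n : ℕ) (M : ModuleCat.{0} A) :
    ExtVanish A n X M ↔ CV P.complex n M := by
  have e1 : ExtVanish A n X M ↔
      IsZero ((P.complex.linearYonedaObj ℤ M).homology n) := by
    constructor
    · intro h; exact h.of_iso (P.isoExt n M).symm
    · intro h; exact h.of_iso (P.isoExt n M)
  rw [e1, ← HomologicalComplex.exactAt_iff_isZero_homology]
  match n with
  | 0 =>
    rw [HomologicalComplex.exactAt_iff' _ 0 0 1 (CochainComplex.prev_nat_zero)
      (by simp)]
    rw [ShortComplex.moduleCat_exact_iff]
    constructor
    · intro h f hf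
      obtain ⟨g, hg⟩ := h (ModuleCat.ofHom f : P.complex.X 0 ⟶ M) (by
        show P.complex.d 1 0 ≫ (ModuleCat.ofHom f : P.complex.X 0 ⟶ M) = 0
        ext x; exact LinearMap.congr_fun hf x)
      have hg' : (ModuleCat.ofHom f : P.complex.X 0 ⟶ M) = 0 := by
        rw [← hg]
        show ((P.complex.linearYonedaObj ℤ M).d 0 0).hom g = 0
        rw [HomologicalComplex.shape _ 0 0 (by simp)]
        rfl
      simpa using congrArg ModuleCat.Hom.hom hg'
    · intro h f hf
      refine ⟨f, ?_⟩
      have : f.hom = 0 := h f.hom (LinearMap.ext fun x =>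
        LinearMap.congr_fun (congrArg ModuleCat.Hom.hom (hf : P.complex.d 1 0 ≫ f = 0)) x)
      have hf0 : f = 0 := ModuleCat.hom_ext (by rw [this]; rfl)
      show ((P.complex.linearYonedaObj ℤ M).d 0 0).hom f = f
      rw [HomologicalComplex.shape _ 0 0 (by simp)]
      rw [hf0]
      rfl
  | (m+1) =>
    rw [HomologicalComplex.exactAt_iff' _ m (m+1) (m+2) (CochainComplex.prev_nat_succ m)
      (by simp)]
    rw [ShortComplex.moduleCat_exact_iff]
    constructor
    · intro h f hf
      obtain ⟨g, hg⟩ := h (ModuleCat.ofHom f : P.complex.X (m+1) ⟶ M) (by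
        show P.complex.d (m+2) (m+1) ≫ (ModuleCat.ofHom f : P.complex.X (m+1) ⟶ M) = 0
        ext x; exact LinearMap.congr_fun hf x)
      exact ⟨g.hom, (congrArg ModuleCat.Hom.hom hg).symm⟩
    · intro h f hf
      obtain ⟨g, hg⟩ := h f.hom (LinearMap.ext fun x =>
        LinearMap.congr_fun (congrArg ModuleCat.Hom.hom (hf : P.complex.d (m+2) (m+1) ≫ f = 0)) x)
      exact ⟨ModuleCat.ofHom g, ModuleCat.hom_ext hg.symm⟩
end ExtBridge
section Chases
open CategoryTheory Limits
variable {A : Type} [Ring A]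

/-- factor a linear map through a surjection whose kernel it kills -/
lemma factor_through_surj {Y Z W : Type} [AddCommGroup Y] [Module A Y] [AddCommGroup Z]
    [Module A Z] [AddCommGroup W] [Module A W] (p : Y →ₗ[A] Z) (hp : Function.Surjective p)
    (f : Y →ₗ[A] W) (h : ∀ y, p y = 0 → f y = 0) : ∃ g : Z →ₗ[A] W, g.comp p = f := by
  have hle : LinearMap.ker p ≤ LinearMap.ker f := fun y hy =>
    LinearMap.mem_ker.2 (h y (LinearMap.mem_ker.1 hy))
  refine ⟨(Submodule.liftQ (LinearMap.ker p) f hle).comp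
    (p.quotKerEquivOfSurjective hp).symm.toLinearMap, ?_⟩
  apply LinearMap.ext
  intro y
  have h1 : (p.quotKerEquivOfSurjective hp).symm (p y) = Submodule.Quotient.mk y := by
    apply (p.quotKerEquivOfSurjective hp).injective
    rw [LinearEquiv.apply_symm_apply]
    rfl
  simp only [LinearMap.comp_apply, LinearEquiv.coe_coe]
  rw [h1]
  rfl

/-- lift a linear map whose range lies in the range of an injection -/
lemma lift_of_range_le {N I W : Type} [AddCommGroup N] [Module A N] [AddCommGroup I]
    [Module A I] [AddCommGroup W] [Module A W] (ι : N →ₗ[A] I) (hι : Function.Injective ι)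
    (g : W →ₗ[A] I) (h : ∀ x, ∃ y, ι y = g x) : ∃ m : W →ₗ[A] N, ι.comp m = g := by
  let E := LinearEquiv.ofInjective ι hι
  refine ⟨E.symm.toLinearMap.comp (g.codRestrict (LinearMap.range ι)
    (fun x => LinearMap.mem_range.2 (h x))), ?_⟩
  apply LinearMap.ext
  intro x
  show ι (E.symm ⟨g x, _⟩) = g x
  have h2 : ∀ y : N, ι y = (E y : I) := fun y => rfl
  rw [h2, LinearEquiv.apply_symm_apply]

variable {X : ModuleCat.{0} A} (P : ProjectiveResolution X)

lemma res_surj : Function.Surjective ((P.π.f 0).hom : P.complex.X 0 →ₗ[A] X) := by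
  exact (ModuleCat.epi_iff_surjective (f := P.π.f 0)).1 inferInstance

lemma res_exact0 : ∀ x : P.complex.X 0, ((P.π.f 0).hom : P.complex.X 0 →ₗ[A] X) x = 0 →
    ∃ y, (P.complex.d 1 0).hom y = x := by
  intro x hx
  exact (ShortComplex.moduleCat_exact_iff _).1 P.exact₀ x hx

lemma res_exacts (n : ℕ) : ∀ x : P.complex.X (n+1),
    (P.complex.d (n+1) n).hom x = 0 → ∃ y, (P.complex.d (n+2) (n+1)).hom y = x := by
  intro x hx
  exact (ShortComplex.moduleCat_exact_iff _).1 (P.exact_succ n) x hx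

lemma res_dd (n : ℕ) :
    ((P.complex.d (n+1) n).hom : P.complex.X (n+1) →ₗ[A] P.complex.X n).comp
      (P.complex.d (n+2) (n+1)).hom = 0 :=
  congrArg ModuleCat.Hom.hom (P.complex.d_comp_d (n+2) (n+1) n)

lemma res_pid : (((P.π.f 0).hom : P.complex.X 0 →ₗ[A] X)).comp (P.complex.d 1 0).hom = 0 :=
  congrArg ModuleCat.Hom.hom P.complex_d_comp_π_f_zero

lemma res_proj_lift (n : ℕ) {Y Z : ModuleCat.{0} A} (p : Y →ₗ[A] Z)
    (hp : Function.Surjective p) (f : P.complex.X n →ₗ[A] Z) :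
    ∃ g : P.complex.X n →ₗ[A] Y, p.comp g = f := by
  let F : P.complex.X n ⟶ Z := ModuleCat.ofHom f
  let q : Y ⟶ Z := ModuleCat.ofHom p
  haveI : Epi q := (ModuleCat.epi_iff_surjective q).2 hp
  refine ⟨(Projective.factorThru F q).hom, ?_⟩
  exact congrArg ModuleCat.Hom.hom (Projective.factorThru_comp F q)

section SES
variable {N I C : ModuleCat.{0} A} (ι : N →ₗ[A] I) (ρ : I →ₗ[A] C)
  (hι : Function.Injective ι) (hρ : Function.Surjective ρ) (hex : Function.Exact ι ρ)

include hι hex in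
lemma cv_zero_of (h : CV P.complex 0 I) : CV P.complex 0 N := by
  intro f hf
  have h1 : (ι.comp f).comp (P.complex.d 1 0).hom = 0 := by
    rw [LinearMap.comp_assoc, hf, LinearMap.comp_zero]
  have h2 := h (ι.comp f) h1
  apply LinearMap.ext
  intro x
  have h3 := LinearMap.congr_fun h2 x
  simp only [LinearMap.comp_apply, LinearMap.zero_apply] at h3
  rw [LinearMap.zero_apply]
  apply hι
  rw [map_zero]
  exact h3

include hι hρ hex in
lemma cv_succ_of (i : ℕ) (hC : CV P.complex i C) (hI : CV P.complex (i+1) I) :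
    CV P.complex (i+1) N := by
  intro f hf
  obtain ⟨g, hg⟩ := hI (ι.comp f) (by rw [LinearMap.comp_assoc, hf, LinearMap.comp_zero])
  have hρι : ρ.comp ι = 0 := by
    apply LinearMap.ext; intro x; exact hex.apply_apply_eq_zero x
  match i, hC with
  | 0, hC =>
    have h3 : (ρ.comp g).comp (P.complex.d 1 0).hom = 0 := by
      rw [LinearMap.comp_assoc, ← hg, ← LinearMap.comp_assoc, hρι, LinearMap.zero_comp]
    have h4 : ρ.comp g = 0 := hC (ρ.comp g) h3
    obtain ⟨m, hm⟩ := lift_of_range_le ι hι g (fun x => by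
      have h5 := LinearMap.congr_fun h4 x
      simp only [LinearMap.comp_apply, LinearMap.zero_apply] at h5
      exact (hex (g x)).1 h5)
    refine ⟨m, ?_⟩
    apply LinearMap.ext; intro x
    apply hι
    have h6 := LinearMap.congr_fun hg x
    have h7 := LinearMap.congr_fun hm ((P.complex.d 1 0).hom x)
    simp only [LinearMap.comp_apply] at h6 h7 ⊢
    rw [h6, ← h7]
  | (j+1), hC =>
    have h3 : (ρ.comp g).comp (P.complex.d (j+2) (j+1)).hom = 0 := by
      rw [LinearMap.comp_assoc, ← hg, ← LinearMap.comp_assoc, hρι, LinearMap.zero_comp]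
    obtain ⟨h, hh⟩ := hC (ρ.comp g) h3
    obtain ⟨h', hh'⟩ := res_proj_lift P j ρ hρ h
    set g₂ : P.complex.X (j+1) →ₗ[A] I := g - h'.comp (P.complex.d (j+1) j).hom with hg₂
    have h5 : ι.comp f = g₂.comp (P.complex.d (j+2) (j+1)).hom := by
      rw [hg₂, LinearMap.sub_comp, LinearMap.comp_assoc, res_dd,
        LinearMap.comp_zero, sub_zero, hg]
    have h6 : ρ.comp g₂ = 0 := by
      rw [hg₂, LinearMap.comp_sub, ← LinearMap.comp_assoc, hh', ← hh, sub_self]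
    obtain ⟨m, hm⟩ := lift_of_range_le ι hι g₂ (fun x => by
      have h7 := LinearMap.congr_fun h6 x
      simp only [LinearMap.comp_apply, LinearMap.zero_apply] at h7
      exact (hex (g₂ x)).1 h7)
    refine ⟨m, ?_⟩
    apply LinearMap.ext; intro x
    apply hι
    have h8 := LinearMap.congr_fun h5 x
    have h9 := LinearMap.congr_fun hm ((P.complex.d (j+2) (j+1)).hom x)
    simp only [LinearMap.comp_apply] at h8 h9 ⊢
    rw [h8, ← h9]

include hι hρ hex in
lemma cv_shift (i : ℕ) (hN : CV P.complex (i+1) N) (hI : CV P.complex i I) :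
    CV P.complex i C := by
  have hρι : ρ.comp ι = 0 := by
    apply LinearMap.ext; intro x; exact hex.apply_apply_eq_zero x
  match i, hI with
  | 0, hI =>
    intro f hf
    obtain ⟨g, hg⟩ := res_proj_lift P 0 ρ hρ f
    obtain ⟨h, hh⟩ := lift_of_range_le ι hι (g.comp (P.complex.d 1 0).hom) (fun x => by
      refine (hex _).1 ?_
      have h1 := LinearMap.congr_fun hg ((P.complex.d 1 0).hom x)
      have h2 := LinearMap.congr_fun hf x
      simp only [LinearMap.comp_apply, LinearMap.zero_apply] at h1 h2 ⊢
      rw [h1, h2])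
    have h2 : h.comp (P.complex.d 2 1).hom = 0 := by
      have h3 : ι.comp (h.comp (P.complex.d 2 1).hom) = 0 := by
        rw [← LinearMap.comp_assoc, hh, LinearMap.comp_assoc, res_dd, LinearMap.comp_zero]
      apply LinearMap.ext; intro x
      have h4 := LinearMap.congr_fun h3 x
      simp only [LinearMap.comp_apply, LinearMap.zero_apply] at h4 ⊢
      apply hι
      rw [map_zero]
      exact h4
    obtain ⟨h', hh'⟩ := hN h h2
    have h3 : (g - ι.comp h').comp (P.complex.d 1 0).hom = 0 := by
      rw [LinearMap.sub_comp, LinearMap.comp_assoc, ← hh', hh, sub_self]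
    have h4 : g - ι.comp h' = 0 := hI _ h3
    have h5 : g = ι.comp h' := by rwa [sub_eq_zero] at h4
    apply LinearMap.ext; intro x
    have h6 := LinearMap.congr_fun hg x
    simp only [LinearMap.comp_apply, LinearMap.zero_apply] at h6 ⊢
    rw [← h6, h5]
    have h7 := LinearMap.congr_fun hρι (h' x)
    simp only [LinearMap.comp_apply, LinearMap.zero_apply] at h7
    exact h7
  | (j+1), hI =>
    intro f hf
    obtain ⟨g, hg⟩ := res_proj_lift P (j+1) ρ hρ f
    obtain ⟨h, hh⟩ := lift_of_range_le ι hι (g.comp (P.complex.d (j+2) (j+1)).hom) (fun x => by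
      refine (hex _).1 ?_
      have h1 := LinearMap.congr_fun hg ((P.complex.d (j+2) (j+1)).hom x)
      have h2 := LinearMap.congr_fun hf x
      simp only [LinearMap.comp_apply, LinearMap.zero_apply] at h1 h2 ⊢
      rw [h1, h2])
    have h2 : h.comp (P.complex.d (j+3) (j+2)).hom = 0 := by
      have h3 : ι.comp (h.comp (P.complex.d (j+3) (j+2)).hom) = 0 := by
        rw [← LinearMap.comp_assoc, hh, LinearMap.comp_assoc, res_dd, LinearMap.comp_zero]
      apply LinearMap.ext; intro x
      have h4 := LinearMap.congr_fun h3 x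
      simp only [LinearMap.comp_apply, LinearMap.zero_apply] at h4 ⊢
      apply hι
      rw [map_zero]
      exact h4
    obtain ⟨h', hh'⟩ := hN h h2
    have h3 : (g - ι.comp h').comp (P.complex.d (j+2) (j+1)).hom = 0 := by
      rw [LinearMap.sub_comp, LinearMap.comp_assoc, ← hh', hh, sub_self]
    obtain ⟨u, hu⟩ := hI _ h3
    refine ⟨ρ.comp u, ?_⟩
    rw [← hg, LinearMap.comp_assoc, ← hu, LinearMap.comp_sub, ← LinearMap.comp_assoc, hρι,
      LinearMap.zero_comp, sub_zero]
end SES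

lemma cv_succ_of_injective {I : ModuleCat.{0} A} (hI : Module.Injective A I) (i : ℕ) :
    CV P.complex (i+1) I := by
  intro f hf
  have hker : ∀ x : P.complex.X (i+1), (P.complex.d (i+1) i).hom x = 0 → f x = 0 := by
    intro x hx
    obtain ⟨y, hy⟩ := res_exacts P i x hx
    have := LinearMap.congr_fun hf y
    simp only [LinearMap.comp_apply, LinearMap.zero_apply] at this
    rw [← hy]
    exact this
  obtain ⟨f₁, hf₁⟩ := factor_through_surj
    ((P.complex.d (i+1) i).hom.rangeRestrict (M₂ := P.complex.X i))
    (LinearMap.surjective_rangeRestrict _) f (fun y hy => hker y (congrArg Subtype.val hy))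
  obtain ⟨g, hg⟩ := hI.out (LinearMap.range (P.complex.d (i+1) i).hom).subtype
    (Submodule.injective_subtype _) f₁
  refine ⟨g, ?_⟩
  apply LinearMap.ext; intro x
  have h1 := LinearMap.congr_fun hf₁ x
  simp only [LinearMap.comp_apply] at h1 ⊢
  rw [← h1, ← hg ((P.complex.d (i+1) i).hom.rangeRestrict x)]
  rfl

lemma cv_zero_of_homvanish {I : ModuleCat.{0} A} (hv : ∀ g : X →ₗ[A] I, g = 0) :
    CV P.complex 0 I := by
  intro f hf
  obtain ⟨g, hg⟩ := factor_through_surj ((P.π.f 0).hom : P.complex.X 0 →ₗ[A] X) (res_surj P) f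
    (fun y hy => by
      obtain ⟨z, hz⟩ := res_exact0 P y hy
      have := LinearMap.congr_fun hf z
      simp only [LinearMap.comp_apply, LinearMap.zero_apply] at this
      rw [← hz]
      exact this)
  rw [← hg, hv g]
  exact LinearMap.zero_comp _
end Chases
section Embed
open CategoryTheory
variable {k A : Type} [Field k] [Ring A] [Algebra k A]

lemma quotMod_e_smul (e : A) (y : quotMod A e) : e • y = 0 := by
  obtain ⟨a, rfl⟩ := Submodule.Quotient.mk_surjective _ y
  show Submodule.Quotient.mk (e • a) = (0 : A ⧸ idemIdeal A e)
  rw [Submodule.Quotient.mk_eq_zero]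
  exact Submodule.subset_span ⟨a, rfl⟩

lemma homvanish_inadd (e : A) (he : IsIdempotentElem e) {I : ModuleCat.{0} A}
    (h : InAdd A (DeA k A e) I) (g : quotMod A e →ₗ[A] I) : g = 0 := by
  obtain ⟨n, i, p, hpi⟩ := h
  have h1 : i.comp g = 0 := by
    apply LinearMap.ext; intro y
    apply funext; intro j
    have h2 : (LinearMap.proj j).comp (i.comp g) = (0 : quotMod A e →ₗ[A] DeA k A e) :=
      hom_deA_eq_zero e he (quotMod_e_smul e) _
    have := LinearMap.congr_fun h2 y
    exact this
  have : g = (p.comp i).comp g := by rw [hpi]; rfl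
  rw [this, LinearMap.comp_assoc, h1, LinearMap.comp_zero]

/-- Module.Finite over k implies over A, for the compHom structure or any tower -/
lemma finite_A_of_finite_k {N : Type} [AddCommGroup N] [Module A N] [Module k N]
    (hsmul : ∀ (c : k) (x : N), c • x = algebraMap k A c • x)
    (h : Module.Finite k N) : Module.Finite A N := by
  obtain ⟨S, hS⟩ := h.fg_top
  refine ⟨⟨S, ?_⟩⟩
  rw [eq_top_iff]
  intro x _
  have hx : x ∈ Submodule.span k (S : Set N) := by rw [hS]; trivial
  refine Submodule.span_induction ?_ ?_ ?_ ?_ hx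
  · exact fun y hy => Submodule.subset_span hy
  · exact Submodule.zero_mem _
  · exact fun y z _ _ hy hz => Submodule.add_mem _ hy hz
  · intro c y _ hy
    rw [hsmul]
    exact Submodule.smul_mem _ _ hy

lemma dualMod_finite [FiniteDimensional k A] : Module.Finite A (DualMod k A) := by
  letI : Module k (DualMod k A) := inferInstanceAs (Module k (A →ₗ[k] k))
  have : Module.Finite k (DualMod k A) := inferInstanceAs (Module.Finite k (A →ₗ[k] k))
  exact finite_A_of_finite_k (N := DualMod k A)
    (fun c x => by
      apply LinearMap.ext; intro y
      show c • (DualMod.toLin x y) = x.toLin (y * algebraMap k A c)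
      rw [← Algebra.commutes c y, ← Algebra.smul_def, map_smul])
    this

lemma deA_finite [FiniteDimensional k A] (e : A) : Module.Finite A (DeA k A e) := by
  haveI := dualMod_finite (k := k) (A := A)
  exact Module.Finite.of_surjective (killSub k A e).mkQ (Submodule.mkQ_surjective _)

/-- the separation property extracted from vanishing of `Hom(A/AeA, N)` -/
lemma sep_of_cv0 {e : A} (P : ProjectiveResolution (quotMod A e))
    {N : ModuleCat.{0} A} (h : CV P.complex 0 N) :
    ∀ m : N, m ≠ 0 → ∃ b : A, (e * b) • m ≠ 0 := by
  intro m hm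
  by_contra hc
  push_neg at hc
  have hle : idemIdeal A e ≤ LinearMap.ker (LinearMap.toSpanSingleton A N m) := by
    rw [idemIdeal, Submodule.span_le]
    rintro x ⟨b, rfl⟩
    exact LinearMap.mem_ker.2 (hc b)
  let fbar : quotMod A e →ₗ[A] N := Submodule.liftQ _ _ hle
  have hf : (fbar.comp ((P.π.f 0).hom : P.complex.X 0 →ₗ[A] quotMod A e)).comp
      (P.complex.d 1 0).hom = 0 := by
    refine LinearMap.ext fun x => ?_
    exact (congrArg fbar (LinearMap.congr_fun (res_pid P) x)).trans (map_zero fbar)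
  have h0 := h _ hf
  have hfbar : fbar = 0 := by
    apply LinearMap.ext; intro y
    obtain ⟨x, rfl⟩ := res_surj P y
    have := LinearMap.congr_fun h0 x
    exact this
  have : fbar (Submodule.Quotient.mk 1) = m := by
    show (1 : A) • m = m
    rw [one_smul]
  rw [hfbar] at this
  exact hm (by rw [← this]; rfl)
end Embed
section EmbedLemma
variable {k A : Type} [Field k] [Ring A] [Algebra k A]

lemma embed [FiniteDimensional k A] (e' : A) {N : ModuleCat.{0} A} (hN : Module.Finite A N)
    (hsep : ∀ m : N, m ≠ 0 → ∃ b : A, (e' * b) • m ≠ 0) :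
    ∃ (n : ℕ) (ν : N →ₗ[A] (Fin n → DeA k A e')), Function.Injective ν := by
  letI : Module k N := Module.compHom N (algebraMap k A)
  haveI : IsScalarTower k A N := ⟨fun c a x => by
    show (c • a) • x = algebraMap k A c • (a • x)
    rw [Algebra.smul_def, mul_smul]⟩
  haveI : Module.Finite k N := Module.Finite.trans A (↑N)
  set n := Module.finrank k N with hn
  let B := Module.finBasis k N
  let ψ : N → Fin n → DualMod k A := fun m i =>
    { toFun := fun a => B.coord i (a • m)
      map_add' := fun a b => by
        show B.coord i ((a + b) • m) = B.coord i (a • m) + B.coord i (b • m)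
        rw [add_smul, map_add]
      map_smul' := fun c a => by
        show B.coord i ((c • a) • m) = c • B.coord i (a • m)
        rw [smul_assoc, map_smul] }
  have hψsmul : ∀ (b : A) (m : N) (i : Fin n), ψ (b • m) i = b • ψ m i := by
    intro b m i
    apply LinearMap.ext; intro a
    show B.coord i (a • b • m) = (ψ m i).toLin (a * b)
    rw [smul_smul]
    rfl
  let ν : N →ₗ[A] (Fin n → DeA k A e') :=
    { toFun := fun m i => Submodule.Quotient.mk (ψ m i)
      map_add' := fun m m' => funext fun i => by
        show (Submodule.Quotient.mk (ψ (m + m') i) : DualMod k A ⧸ killSub k A e') =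
          Submodule.Quotient.mk (ψ m i) + Submodule.Quotient.mk (ψ m' i)
        rw [← Submodule.Quotient.mk_add]
        congr 1
        apply LinearMap.ext; intro a
        show B.coord i (a • (m + m')) = B.coord i (a • m) + B.coord i (a • m')
        rw [smul_add, map_add]
      map_smul' := fun b m => funext fun i => by
        show (Submodule.Quotient.mk (ψ (b • m) i) : DualMod k A ⧸ killSub k A e') =
          b • (Submodule.Quotient.mk (ψ m i) : DualMod k A ⧸ killSub k A e')
        rw [← Submodule.Quotient.mk_smul, hψsmul] }
  refine ⟨n, ν, ?_⟩
  rw [← LinearMap.ker_eq_bot, LinearMap.ker_eq_bot']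
  intro m hm
  by_contra hm0
  obtain ⟨b, hb⟩ := hsep m hm0
  have hcoords : ∀ i : Fin n, B.coord i ((e' * b) • m) = 0 := by
    intro i
    have h1 : Submodule.Quotient.mk (ψ m i) = (0 : DualMod k A ⧸ killSub k A e') := congrFun hm i
    rw [Submodule.Quotient.mk_eq_zero] at h1
    exact h1 b
  exact hb (B.forall_coord_eq_zero_iff.1 hcoords)
end EmbedLemma
section Step
open CategoryTheory
variable {k A : Type} [Field k] [Ring A] [Algebra k A]

structure StepData (k A : Type) [Field k] [Ring A] [Algebra k A] (e : A)
    (N : ModuleCat.{0} A) where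
  I : ModuleCat.{0} A
  Q : ModuleCat.{0} A
  ν : N →ₗ[A] I
  ρ : I →ₗ[A] Q
  injI : Module.Injective A I
  finQ : Module.Finite A Q
  hν : Function.Injective ν
  hρ : Function.Surjective ρ
  hexact : Function.Exact ν ρ
  hadd : (∀ m : N, m ≠ 0 → ∃ b : A, (e * b) • m ≠ 0) → InAdd A (DeA k A e) I

lemma step_exists [FiniteDimensional k A] (e : A) (he : IsIdempotentElem e)
    (N : ModuleCat.{0} A) (hN : Module.Finite A N) : Nonempty (StepData k A e N) := by
  by_cases h : ∀ m : N, m ≠ 0 → ∃ b : A, (e * b) • m ≠ 0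
  · obtain ⟨n, ν, hν⟩ := embed (k := k) e hN h
    haveI := deA_finite (k := k) (A := A) e
    haveI : Module.Finite A (Fin n → DeA k A e) := inferInstance
    have hex' : Function.Exact ν (LinearMap.range ν).mkQ := by
      intro y
      rw [Submodule.mkQ_apply, Submodule.Quotient.mk_eq_zero]
      exact ⟨fun hy => LinearMap.mem_range.1 hy, fun ⟨x, hx⟩ => ⟨x, hx⟩⟩
    exact ⟨⟨ModuleCat.of A (Fin n → DeA k A e),
      ModuleCat.of A ((Fin n → DeA k A e) ⧸ LinearMap.range ν), ν,
      (LinearMap.range ν).mkQ, injective_pi (deA_injective e he) n,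
      Module.Finite.of_surjective (LinearMap.range ν).mkQ (Submodule.mkQ_surjective _),
      hν, Submodule.mkQ_surjective _, hex', fun _ => ⟨n, LinearMap.id, LinearMap.id, rfl⟩⟩⟩
  · obtain ⟨n, ν, hν⟩ := embed (k := k) (1 : A) hN (fun m hm => ⟨1, by
      rw [one_mul, one_smul]; exact hm⟩)
    haveI := deA_finite (k := k) (A := A) (1 : A)
    haveI : Module.Finite A (Fin n → DeA k A 1) := inferInstance
    have hex' : Function.Exact ν (LinearMap.range ν).mkQ := by
      intro y
      rw [Submodule.mkQ_apply, Submodule.Quotient.mk_eq_zero]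
      exact ⟨fun hy => LinearMap.mem_range.1 hy, fun ⟨x, hx⟩ => ⟨x, hx⟩⟩
    exact ⟨⟨ModuleCat.of A (Fin n → DeA k A 1),
      ModuleCat.of A ((Fin n → DeA k A 1) ⧸ LinearMap.range ν), ν,
      (LinearMap.range ν).mkQ, injective_pi (deA_injective 1 IsIdempotentElem.one) n,
      Module.Finite.of_surjective (LinearMap.range ν).mkQ (Submodule.mkQ_surjective _),
      hν, Submodule.mkQ_surjective _, hex', fun hs => absurd hs h⟩⟩

variable [FiniteDimensional k A]

/-- the tower of cosyzygies -/
noncomputable def tower (e : A) (he : IsIdempotentElem e) (M : ModuleCat.{0} A)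
    (hM : Module.Finite A M) : ℕ → Σ' (N : ModuleCat.{0} A), Module.Finite A N :=
  fun j => Nat.rec ⟨M, hM⟩ (fun _ t =>
    let s := (step_exists (k := k) e he t.1 t.2).some
    ⟨s.Q, s.finQ⟩) j

/-- the chosen step at stage `j` -/
noncomputable def stp (e : A) (he : IsIdempotentElem e) (M : ModuleCat.{0} A)
    (hM : Module.Finite A M) (j : ℕ) : StepData k A e (tower (k := k) e he M hM j).1 :=
  (step_exists (k := k) e he (tower (k := k) e he M hM j).1 (tower (k := k) e he M hM j).2).some

lemma tower_succ (e : A) (he : IsIdempotentElem e) (M : ModuleCat.{0} A)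
    (hM : Module.Finite A M) (j : ℕ) :
    (tower (k := k) e he M hM (j+1)).1 = (stp (k := k) e he M hM j).Q := rfl
end Step
/-- `M` has an injective coresolution whose first `l+1` terms lie in
`add D(eA)` iff `Ext^i_A(A/⟨e⟩, M) = 0` for all `0 ≤ i ≤ l`. -/
theorem stmt_0 (k A : Type) [Field k] [Ring A] [Algebra k A] [FiniteDimensional k A]
    (e : A) (he : IsIdempotentElem e)
    (M : ModuleCat.{0} A) (hM : Module.Finite A M) (l : ℕ) :
    (∃ (I : ℕ → ModuleCat.{0} A) (ι : M →ₗ[A] I 0) (d : ∀ n : ℕ, I n →ₗ[A] I (n + 1)),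
      (∀ n, Module.Injective A (I n)) ∧
      Function.Injective ι ∧
      Function.Exact ι (d 0) ∧
      (∀ n, Function.Exact (d n) (d (n + 1))) ∧
      (∀ n ≤ l, InAdd A (DeA k A e) (I n)))
    ↔ (∀ i ≤ l, ExtVanish A i (quotMod A e) M) := by
  classical
  obtain ⟨P⟩ := (HasProjectiveResolution.out (Z := quotMod A e))
  constructor
  · rintro ⟨I, ι, d, hinj, hι, hex0, hexs, hadd⟩ i hil
    rw [extVanish_iff_cv P]
    have hIcv : ∀ j, j ≤ l → ∀ i, CV P.complex i (I j) := by
      intro j hj i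
      match i with
      | 0 => exact cv_zero_of_homvanish P (fun g => homvanish_inadd e he (hadd j hj) g)
      | (i'+1) => exact cv_succ_of_injective P (hinj j) i'
    have key : ∀ i j, i + j ≤ l → ∀ (N : ModuleCat.{0} A) (ιN : N →ₗ[A] I j),
        Function.Injective ιN → Function.Exact ιN (d j) → CV P.complex i N := by
      intro i
      induction i with
      | zero =>
        intro j hj N ιN hιN hexN
        refine cv_zero_of (C := ModuleCat.of A (LinearMap.range (d j))) P ιN ((d j).rangeRestrict) hιN ?_ (hIcv j (by omega) 0)
        intro y
        constructor
        · intro hy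
          exact (hexN y).1 (congrArg Subtype.val hy)
        · intro hy
          exact Subtype.ext ((hexN y).2 hy)
      | succ i' ih =>
        intro j hj N ιN hιN hexN
        have hexN' : Function.Exact ιN ((d j).rangeRestrict) := by
          intro y
          constructor
          · intro hy
            exact (hexN y).1 (congrArg Subtype.val hy)
          · intro hy
            exact Subtype.ext ((hexN y).2 hy)
        have hC : CV P.complex i' (ModuleCat.of A (LinearMap.range (d j))) := by
          refine ih (j+1) (by omega) (ModuleCat.of A (LinearMap.range (d j)))
            ((LinearMap.range (d j)).subtype) (Submodule.injective_subtype _) ?_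
          intro y
          rw [hexs j y]
          constructor
          · rintro ⟨z, rfl⟩
            exact ⟨⟨d j z, ⟨z, rfl⟩⟩, rfl⟩
          · rintro ⟨⟨w, hw⟩, rfl⟩
            exact hw
        exact cv_succ_of (C := ModuleCat.of A (LinearMap.range (d j))) P ιN
          ((d j).rangeRestrict) hιN
          (LinearMap.surjective_rangeRestrict _) hexN' i' hC (hIcv j (by omega) (i'+1))
    exact key i 0 (by omega) M ι hι hex0
  · intro hext
    set T := tower (k := k) e he M hM with hT
    set S := fun j => stp (k := k) e he M hM j with hS
    have invariant : ∀ j i, i + j ≤ l → CV P.complex i (T j).1 := by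
      intro j
      induction j with
      | zero =>
        intro i hi
        exact (extVanish_iff_cv P i M).1 (hext i (by omega))
      | succ j ih =>
        intro i hi
        have hIj : CV P.complex i (S j).I := by
          match i with
          | 0 =>
            refine cv_zero_of_homvanish P (fun g => ?_)
            refine homvanish_inadd e he ((S j).hadd ?_) g
            exact sep_of_cv0 P (ih 0 (by omega))
          | (i'+1) => exact cv_succ_of_injective P (S j).injI i'
        exact cv_shift P (S j).ν (S j).ρ (S j).hν (S j).hρ (S j).hexact i
          (ih (i+1) (by omega)) hIj
    refine ⟨fun j => (S j).I, (S 0).ν, fun j => (S (j+1)).ν.comp ((S j).ρ),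
      fun j => (S j).injI, (S 0).hν, ?_, ?_, ?_⟩
    · intro y
      show (S 1).ν ((S 0).ρ y) = 0 ↔ _
      have hν0 : ∀ x, (S 1).ν x = 0 ↔ x = 0 := fun x =>
        ⟨fun hx => (S 1).hν (by rw [hx, map_zero]), fun hx => by rw [hx, map_zero]⟩
      refine (hν0 _).trans ?_
      exact (S 0).hexact y
    · intro j y
      show (S (j+2)).ν ((S (j+1)).ρ y) = 0 ↔ _
      have hν0 : ∀ x, (S (j+2)).ν x = 0 ↔ x = 0 := fun x =>
        ⟨fun hx => (S (j+2)).hν (by rw [hx, map_zero]), fun hx => by rw [hx, map_zero]⟩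
      refine (hν0 _).trans ?_
      refine ((S (j+1)).hexact y).trans ?_
      constructor
      · rintro ⟨z, rfl⟩
        obtain ⟨x, hx⟩ := (S j).hρ z
        exact ⟨x, by show (S (j+1)).ν ((S j).ρ x) = _; rw [hx]⟩
      · rintro ⟨x, rfl⟩
        exact ⟨(S j).ρ x, rfl⟩
    · intro n hn
      exact (S n).hadd (sep_of_cv0 P (invariant n 0 (by omega)))

end
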